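/- Let θ be a nonzero real number and g the 3-dimensional real Lie algebra with basis e₁, e₂, e₃ and brackets [e₁,e₃] = θ·e₁ - e₂, [e₂,e₃] = e₁ + θ·e₂, [e₁,e₂] = 0. Then g × g admits an integrable complex structure. -/

import Mathlib

/-- Componentwise bracket on the product. -/
instance prodBracket {L : Type*} [LieRing L] : Bracket (L × L) (L × L) :=
  ⟨fun x y => (⁅x.1, y.1⁆, ⁅x.2, y.2⁆)⟩

instance prodLieRing {L : Type*} [LieRing L] : LieRing (L × L) where
  add_lie x y z := by ext <;> simp [Bracket.bracket]
  lie_add x y z := by ext <;> simp [Bracket.bracket]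
  lie_self x := by ext <;> simp [Bracket.bracket]
  leibniz_lie x y z := by ext <;> simp [Bracket.bracket]

instance prodLieAlgebra {L : Type*} [LieRing L] [LieAlgebra ℝ L] : LieAlgebra ℝ (L × L) where
  lie_smul t x y := by ext <;> simp [Bracket.bracket]

lemma prod_bracket_eq {L : Type*} [LieRing L] (x y : L × L) :
    ⁅x, y⁆ = (⁅x.1, y.1⁆, ⁅x.2, y.2⁆) := rfl

set_option maxHeartbeats 2000000 in
theorem bianchi6_product_admits {g : Type*} [LieRing g] [LieAlgebra ℝ g]
    (b : Module.Basis (Fin 3) ℝ g) (θ : ℝ) (hθ : θ ≠ 0)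
    (h13 : ⁅b 0, b 2⁆ = θ • b 0 - b 1) (h23 : ⁅b 1, b 2⁆ = b 0 + θ • b 1)
    (h12 : ⁅b 0, b 1⁆ = 0) :
    ∃ 𝒥 : (g × g) →ₗ[ℝ] (g × g), (∀ x, 𝒥 (𝒥 x) = -x) ∧
      ∀ x y : g × g,
        ⁅x, y⁆ + 𝒥 ⁅𝒥 x, y⁆ + 𝒥 ⁅x, 𝒥 y⁆ - ⁅𝒥 x, 𝒥 y⁆ = 0 := by
  classical
  have h31 : ⁅b 2, b 0⁆ = -(θ • b 0) + b 1 := by rw [← lie_skew, h13]; abel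
  have h32 : ⁅b 2, b 1⁆ = -(b 0) - θ • b 1 := by rw [← lie_skew, h23]; abel
  have h21 : ⁅b 1, b 0⁆ = 0 := by rw [← lie_skew, h12]; simp
  set B : Module.Basis (Fin 3 ⊕ Fin 3) ℝ (g × g) := b.prod b with hB
  let f : Fin 3 ⊕ Fin 3 → g × g := Sum.elim
    ![B (.inl 1), -B (.inl 0), B (.inr 2)]
    ![B (.inr 1), -B (.inr 0), -B (.inl 2)]
  set J : (g × g) →ₗ[ℝ] (g × g) := B.constr ℝ f with hJ
  have ja0 : J (B (.inl 0)) = B (.inl 1) := B.constr_basis ℝ f (.inl 0)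
  have ja1 : J (B (.inl 1)) = -B (.inl 0) := B.constr_basis ℝ f (.inl 1)
  have ja2 : J (B (.inl 2)) = B (.inr 2) := B.constr_basis ℝ f (.inl 2)
  have jb0 : J (B (.inr 0)) = B (.inr 1) := B.constr_basis ℝ f (.inr 0)
  have jb1 : J (B (.inr 1)) = -B (.inr 0) := B.constr_basis ℝ f (.inr 1)
  have jb2 : J (B (.inr 2)) = -B (.inl 2) := B.constr_basis ℝ f (.inr 2)
  have hBl : ∀ i, B (.inl i) = (b i, 0) := by
    intro i; simp [hB, Module.Basis.prod_apply]
  have hBr : ∀ i, B (.inr i) = (0, b i) := by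
    intro i; simp [hB, Module.Basis.prod_apply]
  have cross1 : ∀ i j, ⁅B (.inl i), B (.inr j)⁆ = 0 := by
    intro i j; rw [hBl, hBr, prod_bracket_eq]; simp
  have cross2 : ∀ i j, ⁅B (.inr i), B (.inl j)⁆ = 0 := by
    intro i j; rw [hBr, hBl, prod_bracket_eq]; simp
  have tl01 : ⁅B (.inl 0), B (.inl 1)⁆ = 0 := by
    rw [hBl, hBl, prod_bracket_eq]; simp [h12]
  have tl10 : ⁅B (.inl 1), B (.inl 0)⁆ = 0 := by
    rw [hBl, hBl, prod_bracket_eq]; simp [h21]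
  have tl02 : ⁅B (.inl 0), B (.inl 2)⁆ = θ • B (.inl 0) - B (.inl 1) := by
    simp [hBl, hBr, prod_bracket_eq, Prod.ext_iff, h13]
  have tl20 : ⁅B (.inl 2), B (.inl 0)⁆ = -(θ • B (.inl 0)) + B (.inl 1) := by
    simp [hBl, hBr, prod_bracket_eq, Prod.ext_iff, h31]
  have tl12 : ⁅B (.inl 1), B (.inl 2)⁆ = B (.inl 0) + θ • B (.inl 1) := by
    simp [hBl, hBr, prod_bracket_eq, Prod.ext_iff, h23]
  have tl21 : ⁅B (.inl 2), B (.inl 1)⁆ = -B (.inl 0) - θ • B (.inl 1) := by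
    simp [hBl, hBr, prod_bracket_eq, Prod.ext_iff, h32]
  have tr01 : ⁅B (.inr 0), B (.inr 1)⁆ = 0 := by
    rw [hBr, hBr, prod_bracket_eq]; simp [h12]
  have tr10 : ⁅B (.inr 1), B (.inr 0)⁆ = 0 := by
    rw [hBr, hBr, prod_bracket_eq]; simp [h21]
  have tr02 : ⁅B (.inr 0), B (.inr 2)⁆ = θ • B (.inr 0) - B (.inr 1) := by
    simp [hBl, hBr, prod_bracket_eq, Prod.ext_iff, h13]
  have tr20 : ⁅B (.inr 2), B (.inr 0)⁆ = -(θ • B (.inr 0)) + B (.inr 1) := by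
    simp [hBl, hBr, prod_bracket_eq, Prod.ext_iff, h31]
  have tr12 : ⁅B (.inr 1), B (.inr 2)⁆ = B (.inr 0) + θ • B (.inr 1) := by
    simp [hBl, hBr, prod_bracket_eq, Prod.ext_iff, h23]
  have tr21 : ⁅B (.inr 2), B (.inr 1)⁆ = -B (.inr 0) - θ • B (.inr 1) := by
    simp [hBl, hBr, prod_bracket_eq, Prod.ext_iff, h32]
  refine ⟨J, ?_, ?_⟩
  · have hsq : J ∘ₗ J = -LinearMap.id := by
      apply B.ext
      rintro (i | i) <;> fin_cases i <;>
        simp only [Fin.zero_eta, Fin.mk_one, Fin.reduceFinMk, LinearMap.comp_apply,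
          LinearMap.neg_apply, LinearMap.id_apply, ja0, ja1, ja2, jb0, jb1, jb2,
          map_neg, neg_neg]
    intro x
    have := LinearMap.congr_fun hsq x
    simpa using this
  · let N : (g × g) →ₗ[ℝ] (g × g) →ₗ[ℝ] (g × g) := LinearMap.mk₂ ℝ
      (fun x y => ⁅x, y⁆ + J ⁅J x, y⁆ + J ⁅x, J y⁆ - ⁅J x, J y⁆)
      (by intros; simp only [add_lie, map_add, lie_add] <;> abel)
      (by intros; simp only [smul_lie, map_smul, lie_smul, smul_add, smul_sub] <;> abel)
      (by intros; simp only [lie_add, map_add, add_lie] <;> abel)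
      (by intros; simp only [lie_smul, map_smul, smul_lie, smul_add, smul_sub] <;> abel)
    have hN : N = 0 := by
      apply B.ext
      rintro (i | i) <;> fin_cases i <;>
      · apply B.ext
        rintro (j | j) <;> fin_cases j <;>
          (simp only [Fin.zero_eta, Fin.mk_one, Fin.reduceFinMk, N, LinearMap.mk₂_apply,
            LinearMap.zero_apply, ja0, ja1, ja2, jb0, jb1, jb2,
            tl01, tl10, tl02, tl20, tl12, tl21, tr01, tr10, tr02, tr20, tr12, tr21,
            cross1, cross2, lie_self, neg_lie, lie_neg, add_lie, lie_add, sub_lie, lie_sub,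
            smul_lie, lie_smul, map_add, map_sub, map_smul, map_neg, map_zero,
            lie_zero, zero_lie, neg_neg, smul_neg, neg_zero, smul_zero, add_zero, zero_add,
            sub_zero, zero_sub, sub_self, neg_add_rev] <;> module)
    intro x y
    have := LinearMap.congr_fun₂ hN x y
    simpa [N] using this
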